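/- (Fractional Grönwall inequality / comparison principle.) Let 0 < γ < 1 and T_b ∈ (0, ∞]. Let f : [0, ∞) × ℝ → ℝ be continuous, Lipschitz in the second variable on every set [0, T] × [−M, M], and nondecreasing in the second variable (for every t ≥ 0, x ≤ y implies f(t, x) ≤ f(t, y)). Suppose v₁ : [0, T_b) → ℝ is continuous and satisfies v₁(t) ≤ v₁(0) + (1/Γ(γ)) ∫_0^t (t−s)^{γ−1} f(s, v₁(s)) ds for all t ∈ [0, T_b), and v₂ : [0, T_b) → ℝ is continuous and satisfies v₂(t) = v₂(0) + (1/Γ(γ)) ∫_0^t (t−s)^{γ−1} f(s, v₂(s)) ds for all t ∈ [0, T_b), with v₂(0) ≥ v₁(0). Then v₁(t) ≤ v₂(t) for all t ∈ [0, T_b). -/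

import Mathlib

open MeasureTheory Set
open scoped ENNReal

lemma frac_aux_int (γ : ℝ) (hγ0 : 0 < γ) (s a b : ℝ) {g : ℝ → ℝ}
    (hg : ContinuousOn g (uIcc a b)) :
    IntervalIntegrable (fun r => (s - r) ^ (γ - 1) * g r) volume a b := by
  have h1 : IntervalIntegrable (fun x : ℝ => x ^ (γ - 1)) volume (s - a) (s - b) :=
    intervalIntegral.intervalIntegrable_rpow' (by linarith)
  have h2 := h1.comp_sub_left s
  simp only [sub_sub_cancel] at h2
  exact h2.mul_continuousOn hg

lemma frac_aux_eval (γ : ℝ) (hγ0 : 0 < γ) {a u : ℝ} :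
    ∫ r in a..u, (u - r) ^ (γ - 1) = (u - a) ^ γ / γ := by
  rw [intervalIntegral.integral_comp_sub_left (fun x => x ^ (γ - 1)) u, sub_self]
  rw [integral_rpow (Or.inl (by linarith))]
  rw [sub_add_cancel, Real.zero_rpow hγ0.ne', sub_zero]

/-- Fractional Grönwall inequality / comparison principle: for `0 < γ < 1`,
`T_b ∈ (0,∞]`, `f` continuous on `[0,∞) × ℝ`, Lipschitz in the second variable on every
`[0,T] × [−M,M]`, and nondecreasing in the second variable; if `v₁` is continuous on
`[0,T_b)` and satisfies the integral inequality
`v₁(t) ≤ v₁(0) + (1/Γ(γ)) ∫_0^t (t−s)^{γ−1} f(s, v₁(s)) ds` (i.e. `D_c^γ v₁ ≤ f(t,v₁)`),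
`v₂` is a continuous solution of the corresponding integral equation on `[0,T_b)`
(i.e. `D_c^γ v₂ = f(t,v₂)`), and `v₂(0) ≥ v₁(0)`, then `v₁ ≤ v₂` on `[0,T_b)`. -/
theorem fractional_gronwall_comparison
    (γ : ℝ) (hγ0 : 0 < γ) (hγ1 : γ < 1) (Tb : ℝ≥0∞) (hTb : 0 < Tb)
    (f : ℝ → ℝ → ℝ)
    (hfc : ContinuousOn (fun p : ℝ × ℝ => f p.1 p.2) (Ici 0 ×ˢ univ))
    (hlip : ∀ T > (0:ℝ), ∀ M > (0:ℝ), ∃ L > (0:ℝ), ∀ t ∈ Icc (0:ℝ) T,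
      ∀ x ∈ Icc (-M) M, ∀ y ∈ Icc (-M) M, |f t x - f t y| ≤ L * |x - y|)
    (hmono : ∀ t : ℝ, 0 ≤ t → ∀ x y : ℝ, x ≤ y → f t x ≤ f t y)
    (v₁ v₂ : ℝ → ℝ)
    (hv₁c : ContinuousOn v₁ {t : ℝ | 0 ≤ t ∧ ENNReal.ofReal t < Tb})
    (hv₂c : ContinuousOn v₂ {t : ℝ | 0 ≤ t ∧ ENNReal.ofReal t < Tb})
    (hv₁ : ∀ t : ℝ, 0 ≤ t → ENNReal.ofReal t < Tb →
      v₁ t ≤ v₁ 0 + (1 / Real.Gamma γ) *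
        ∫ s in (0:ℝ)..t, (t - s) ^ (γ - 1) * f s (v₁ s))
    (hv₂ : ∀ t : ℝ, 0 ≤ t → ENNReal.ofReal t < Tb →
      v₂ t = v₂ 0 + (1 / Real.Gamma γ) *
        ∫ s in (0:ℝ)..t, (t - s) ^ (γ - 1) * f s (v₂ s))
    (h0 : v₁ 0 ≤ v₂ 0) :
    ∀ t : ℝ, 0 ≤ t → ENNReal.ofReal t < Tb → v₁ t ≤ v₂ t := by
  have hΓ : 0 < Real.Gamma γ := Real.Gamma_pos_of_pos hγ0
  set c : ℝ := 1 / Real.Gamma γ with hcdef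
  have hc0 : 0 < c := by positivity
  intro t ht0 htTb
  rcases eq_or_lt_of_le ht0 with h | hT0
  · exact h ▸ h0
  have hsub : Icc (0:ℝ) t ⊆ {s : ℝ | 0 ≤ s ∧ ENNReal.ofReal s < Tb} := fun s hs =>
    ⟨hs.1, lt_of_le_of_lt (ENNReal.ofReal_le_ofReal hs.2) htTb⟩
  have hv₁K : ContinuousOn v₁ (Icc 0 t) := hv₁c.mono hsub
  have hv₂K : ContinuousOn v₂ (Icc 0 t) := hv₂c.mono hsub
  obtain ⟨M₁, hM₁⟩ := isCompact_Icc.exists_bound_of_continuousOn hv₁K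
  obtain ⟨M₂, hM₂⟩ := isCompact_Icc.exists_bound_of_continuousOn hv₂K
  set M : ℝ := max 1 (max M₁ M₂) with hMdef
  have hM0 : (0:ℝ) < M := lt_of_lt_of_le one_pos (le_max_left _ _)
  have hv₁M : ∀ s ∈ Icc (0:ℝ) t, v₁ s ∈ Icc (-M) M := by
    intro s hs
    have h1 : |v₁ s| ≤ M :=
      le_trans (by simpa using hM₁ s hs) ((le_max_left M₁ M₂).trans (le_max_right 1 _))
    exact abs_le.mp h1
  have hv₂M : ∀ s ∈ Icc (0:ℝ) t, v₂ s ∈ Icc (-M) M := by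
    intro s hs
    have h1 : |v₂ s| ≤ M :=
      le_trans (by simpa using hM₂ s hs) ((le_max_right M₁ M₂).trans (le_max_right 1 _))
    exact abs_le.mp h1
  obtain ⟨L, hL0, hLip⟩ := hlip t hT0 M hM0
  set δ : ℝ := min t ((γ / (2 * c * L)) ^ γ⁻¹) with hδdef
  have hq0 : 0 < γ / (2 * c * L) := div_pos hγ0 (mul_pos (mul_pos two_pos hc0) hL0)
  have hδ0 : 0 < δ := lt_min hT0 (Real.rpow_pos_of_pos hq0 _)
  have hδγ : δ ^ γ ≤ γ / (2 * c * L) := by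
    have h1 : δ ≤ (γ / (2 * c * L)) ^ γ⁻¹ := min_le_right _ _
    have h2 := Real.rpow_le_rpow hδ0.le h1 hγ0.le
    rwa [Real.rpow_inv_rpow hq0.le hγ0.ne'] at h2
  have hhalf : c * L * (δ ^ γ / γ) ≤ 1 / 2 := by
    have e : c * L * ((γ / (2 * c * L)) / γ) = 1 / 2 := by
      field_simp
    have m : c * L * (δ ^ γ / γ) ≤ c * L * ((γ / (2 * c * L)) / γ) := by
      apply mul_le_mul_of_nonneg_left _ (mul_nonneg hc0.le hL0.le)
      exact div_le_div_of_nonneg_right hδγ hγ0.le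
    linarith
  have hfv : ∀ (v : ℝ → ℝ), ContinuousOn v (Icc 0 t) →
      ContinuousOn (fun r => f r (v r)) (Icc 0 t) := by
    intro v hv
    exact hfc.comp (continuousOn_id.prodMk hv) (fun r hr => ⟨hr.1, mem_univ _⟩)
  have hfv₁ := hfv v₁ hv₁K
  have hfv₂ := hfv v₂ hv₂K
  have hGc : ContinuousOn (fun r => f r (v₁ r) - f r (v₂ r)) (Icc 0 t) := hfv₁.sub hfv₂
  have key : ∀ a b : ℝ, 0 ≤ a → a ≤ b → b ≤ t → b - a ≤ δ →
      (∀ s ∈ Icc (0:ℝ) a, v₁ s ≤ v₂ s) → ∀ s ∈ Icc (0:ℝ) b, v₁ s ≤ v₂ s := by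
    intro a b ha0 hab hbt hbaδ hIH
    have hIccab : Icc a b ⊆ Icc (0:ℝ) t := Icc_subset_Icc ha0 hbt
    have hwc : ContinuousOn (fun r => max (v₁ r - v₂ r) 0) (Icc a b) :=
      ((hv₁K.mono hIccab).sub (hv₂K.mono hIccab)).sup continuousOn_const
    obtain ⟨r₀, hr₀mem, hr₀max⟩ :=
      isCompact_Icc.exists_isMaxOn ⟨a, left_mem_Icc.mpr hab⟩ hwc
    set A : ℝ := max (v₁ r₀ - v₂ r₀) 0 with hAdef
    have hA0 : 0 ≤ A := le_max_right _ _
    have hAub : ∀ r ∈ Icc a b, v₁ r - v₂ r ≤ A := fun r hr =>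
      (le_max_left _ _).trans (hr₀max hr)
    have est : ∀ u ∈ Icc a b, v₁ u - v₂ u ≤ c * L * A * ((u - a) ^ γ / γ) := by
      intro u hu
      have hu0 : 0 ≤ u := ha0.trans hu.1
      have hut : u ≤ t := hu.2.trans hbt
      have huTb : ENNReal.ofReal u < Tb := (hsub ⟨hu0, hut⟩).2
      have hsubu : uIcc (0:ℝ) u ⊆ Icc 0 t := by
        rw [uIcc_of_le hu0]; exact Icc_subset_Icc le_rfl hut
      have hsubau : uIcc a u ⊆ Icc (0:ℝ) t := by
        rw [uIcc_of_le hu.1]; exact Icc_subset_Icc ha0 hut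
      have hsub0a : uIcc (0:ℝ) a ⊆ Icc 0 t := by
        rw [uIcc_of_le ha0]; exact Icc_subset_Icc le_rfl (hab.trans hbt)
      have hi₁ : IntervalIntegrable (fun r => (u - r) ^ (γ - 1) * f r (v₁ r)) volume 0 u :=
        frac_aux_int γ hγ0 u 0 u (hfv₁.mono hsubu)
      have hi₂ : IntervalIntegrable (fun r => (u - r) ^ (γ - 1) * f r (v₂ r)) volume 0 u :=
        frac_aux_int γ hγ0 u 0 u (hfv₂.mono hsubu)
      have hiG : IntervalIntegrable
          (fun r => (u - r) ^ (γ - 1) * (f r (v₁ r) - f r (v₂ r))) volume 0 u :=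
        frac_aux_int γ hγ0 u 0 u (hGc.mono hsubu)
      have hiGa : IntervalIntegrable
          (fun r => (u - r) ^ (γ - 1) * (f r (v₁ r) - f r (v₂ r))) volume 0 a :=
        frac_aux_int γ hγ0 u 0 a (hGc.mono hsub0a)
      have hiGau : IntervalIntegrable
          (fun r => (u - r) ^ (γ - 1) * (f r (v₁ r) - f r (v₂ r))) volume a u :=
        frac_aux_int γ hγ0 u a u (hGc.mono hsubau)
      have hiC : IntervalIntegrable (fun r => (u - r) ^ (γ - 1) * (L * A)) volume a u :=
        frac_aux_int γ hγ0 u a u continuousOn_const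
      have h1 := hv₁ u hu0 huTb
      have h2 := hv₂ u hu0 huTb
      have hdiff : (∫ r in (0:ℝ)..u, (u - r) ^ (γ - 1) * f r (v₁ r)) -
          (∫ r in (0:ℝ)..u, (u - r) ^ (γ - 1) * f r (v₂ r)) =
          ∫ r in (0:ℝ)..u, (u - r) ^ (γ - 1) * (f r (v₁ r) - f r (v₂ r)) := by
        rw [← intervalIntegral.integral_sub hi₁ hi₂]
        exact intervalIntegral.integral_congr (fun r _ => (mul_sub _ _ _).symm)
      have step1 : v₁ u - v₂ u ≤
          c * ∫ r in (0:ℝ)..u, (u - r) ^ (γ - 1) * (f r (v₁ r) - f r (v₂ r)) := by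
        rw [← hdiff, mul_sub]
        linarith
      have hsplit : (∫ r in (0:ℝ)..u, (u - r) ^ (γ - 1) * (f r (v₁ r) - f r (v₂ r))) =
          (∫ r in (0:ℝ)..a, (u - r) ^ (γ - 1) * (f r (v₁ r) - f r (v₂ r))) +
          ∫ r in a..u, (u - r) ^ (γ - 1) * (f r (v₁ r) - f r (v₂ r)) :=
        (intervalIntegral.integral_add_adjacent_intervals hiGa hiGau).symm
      have part1 : (∫ r in (0:ℝ)..a, (u - r) ^ (γ - 1) * (f r (v₁ r) - f r (v₂ r))) ≤ 0 := by
        have hle : ∀ r ∈ Icc (0:ℝ) a,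
            (u - r) ^ (γ - 1) * (f r (v₁ r) - f r (v₂ r)) ≤ (fun _ => (0:ℝ)) r := by
          intro r hr
          have h1 : f r (v₁ r) - f r (v₂ r) ≤ 0 :=
            sub_nonpos.mpr (hmono r hr.1 _ _ (hIH r hr))
          have h2 : (0:ℝ) ≤ (u - r) ^ (γ - 1) :=
            Real.rpow_nonneg (sub_nonneg.mpr (hr.2.trans hu.1)) _
          exact mul_nonpos_of_nonneg_of_nonpos h2 h1
        have := intervalIntegral.integral_mono_on ha0 hiGa intervalIntegrable_const hle
        simpa using this
      have part2 : (∫ r in a..u, (u - r) ^ (γ - 1) * (f r (v₁ r) - f r (v₂ r))) ≤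
          (L * A) * ((u - a) ^ γ / γ) := by
        have hle : ∀ r ∈ Icc a u,
            (u - r) ^ (γ - 1) * (f r (v₁ r) - f r (v₂ r)) ≤
            (u - r) ^ (γ - 1) * (L * A) := by
          intro r hr
          apply mul_le_mul_of_nonneg_left _ (Real.rpow_nonneg (sub_nonneg.mpr hr.2) _)
          have hrmem : r ∈ Icc (0:ℝ) t := ⟨ha0.trans hr.1, hr.2.trans hut⟩
          rcases le_or_gt (v₁ r) (v₂ r) with hle' | hgt
          · have := sub_nonpos.mpr (hmono r hrmem.1 _ _ hle')
            have : (0:ℝ) ≤ L * A := mul_nonneg hL0.le hA0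
            linarith [sub_nonpos.mpr (hmono r hrmem.1 _ _ hle')]
          · have hb := hLip r ⟨hrmem.1, hrmem.2⟩ (v₁ r) (hv₁M r hrmem) (v₂ r) (hv₂M r hrmem)
            have h3 : f r (v₁ r) - f r (v₂ r) ≤ L * |v₁ r - v₂ r| := (le_abs_self _).trans hb
            rw [abs_of_pos (sub_pos.mpr hgt)] at h3
            have h4 : L * (v₁ r - v₂ r) ≤ L * A :=
              mul_le_mul_of_nonneg_left (hAub r ⟨hr.1, hr.2.trans hu.2⟩) hL0.le
            linarith
        have hmono3 := intervalIntegral.integral_mono_on hu.1 hiGau hiC hle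
        have heval : (∫ r in a..u, (u - r) ^ (γ - 1) * (L * A)) =
            (L * A) * ((u - a) ^ γ / γ) := by
          rw [intervalIntegral.integral_mul_const, frac_aux_eval γ hγ0, mul_comm]
        linarith
      have hcmul : c * ((∫ r in (0:ℝ)..a, (u - r) ^ (γ - 1) * (f r (v₁ r) - f r (v₂ r))) +
          ∫ r in a..u, (u - r) ^ (γ - 1) * (f r (v₁ r) - f r (v₂ r))) ≤
          c * (0 + (L * A) * ((u - a) ^ γ / γ)) := by
        apply mul_le_mul_of_nonneg_left _ hc0.le
        linarith
      calc v₁ u - v₂ u ≤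
          c * ∫ r in (0:ℝ)..u, (u - r) ^ (γ - 1) * (f r (v₁ r) - f r (v₂ r)) := step1
        _ ≤ c * (0 + (L * A) * ((u - a) ^ γ / γ)) := by rw [hsplit]; exact hcmul
        _ = c * L * A * ((u - a) ^ γ / γ) := by ring
    have hA_le : A ≤ A / 2 := by
      rcases le_or_gt (v₁ r₀ - v₂ r₀) 0 with hneg | hpos
      · have : A = 0 := max_eq_right hneg
        rw [this]; norm_num
      · have hAeq : A = v₁ r₀ - v₂ r₀ := max_eq_left hpos.le
        have h1 := est r₀ hr₀mem
        have h2 : (r₀ - a) ^ γ ≤ δ ^ γ :=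
          Real.rpow_le_rpow (sub_nonneg.mpr hr₀mem.1) (by linarith [hr₀mem.2]) hγ0.le
        have h3 : c * L * A * ((r₀ - a) ^ γ / γ) ≤ c * L * A * (δ ^ γ / γ) := by
          apply mul_le_mul_of_nonneg_left _ (mul_nonneg (mul_nonneg hc0.le hL0.le) hA0)
          exact div_le_div_of_nonneg_right h2 hγ0.le
        have h4 : c * L * A * (δ ^ γ / γ) ≤ 1 / 2 * A := by
          have := mul_le_mul_of_nonneg_right hhalf hA0
          nlinarith
        linarith [hAeq ▸ h1]
    have hAzero : A ≤ 0 := by linarith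
    intro s hs
    rcases le_or_gt s a with hsa | has
    · exact hIH s ⟨hs.1, hsa⟩
    · have := hAub s ⟨has.le, hs.2⟩
      linarith
  have main : ∀ n : ℕ, ∀ s ∈ Icc (0:ℝ) (min (n * δ) t), v₁ s ≤ v₂ s := by
    intro n
    induction n with
    | zero =>
      intro s hs
      have hmin : min ((0:ℕ) * δ) t = 0 := by
        simp [min_eq_left hT0.le]
      rw [hmin] at hs
      have : s = 0 := le_antisymm hs.2 hs.1
      rw [this]; exact h0
    | succ n ih =>
      have hab : min ((n:ℝ) * δ) t ≤ min (((n:ℕ)+1 : ℕ) * δ) t := by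
        apply min_le_min _ le_rfl
        push_cast
        nlinarith [hδ0.le]
      have ha0 : (0:ℝ) ≤ min ((n:ℝ) * δ) t :=
        le_min (mul_nonneg (Nat.cast_nonneg n) hδ0.le) hT0.le
      have hbt : min (((n:ℕ)+1 : ℕ) * δ : ℝ) t ≤ t := min_le_right _ _
      have hba : min (((n:ℕ)+1 : ℕ) * δ : ℝ) t - min ((n:ℝ) * δ) t ≤ δ := by
        rcases le_total ((n:ℝ) * δ) t with hc1 | hc1
        · have e1 : min ((n:ℝ) * δ) t = (n:ℝ) * δ := min_eq_left hc1
          have e2 : min (((n:ℕ)+1 : ℕ) * δ : ℝ) t ≤ ((n:ℝ) + 1) * δ := by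
            push_cast
            exact min_le_left _ _
          rw [e1]; nlinarith
        · have e1 : min ((n:ℝ) * δ) t = t := min_eq_right hc1
          have e2 : min (((n:ℕ)+1 : ℕ) * δ : ℝ) t = t := by
            apply min_eq_right
            push_cast
            nlinarith [hδ0.le]
          rw [e1, e2]; simpa using hδ0.le
      exact key _ _ ha0 hab hbt hba ih
  obtain ⟨n, hn⟩ := exists_nat_ge (t / δ)
  have htn : t ≤ (n:ℝ) * δ := by
    rw [div_le_iff₀ hδ0] at hn
    linarith
  exact main n t ⟨ht0, le_min htn le_rfl⟩
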